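/- Let β : ℝ → ℝ⁴ be a smooth curve with ⟨β(t),β(t)⟩ = 1 and β''(t) = −⟨β'(t),β'(t)⟩·β(t) for all t ∈ ℝ (an affinely parametrized geodesic of S³₁). Then ⟨β(0), β(t)⟩ ≥ −1 for all t ∈ ℝ. In particular, if p, q ∈ S³₁ satisfy ⟨p,q⟩ < −1, then there exists no geodesic of S³₁ joining p and q. -/

import Mathlib

open Real

/-- The Minkowski scalar product on `ℝ⁴₁`:
`⟨x,y⟩ = -x₁y₁ + x₂y₂ + x₃y₃ + x₄y₄`. -/
noncomputable def mdot (x y : Fin 4 → ℝ) : ℝ :=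
  -(x 0 * y 0) + x 1 * y 1 + x 2 * y 2 + x 3 * y 3

lemma mdot_symm (x y : Fin 4 → ℝ) : mdot x y = mdot y x := by unfold mdot; ring

lemma mdot_smul (r : ℝ) (x y : Fin 4 → ℝ) : mdot x (r • y) = r * mdot x y := by
  unfold mdot; simp [Pi.smul_apply, smul_eq_mul]; ring

lemma mdot_hasDerivAt {u w : ℝ → Fin 4 → ℝ} {u' w' : Fin 4 → ℝ} {t : ℝ}
    (hu : HasDerivAt u u' t) (hw : HasDerivAt w w' t) :
    HasDerivAt (fun t => mdot (u t) (w t)) (mdot u' (w t) + mdot (u t) w') t := by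
  have hui : ∀ i, HasDerivAt (fun t => u t i) (u' i) t := fun i => hasDerivAt_pi.mp hu i
  have hwi : ∀ i, HasDerivAt (fun t => w t i) (w' i) t := fun i => hasDerivAt_pi.mp hw i
  have h := ((((hui 0).mul (hwi 0)).neg.add ((hui 1).mul (hwi 1))).add
      ((hui 2).mul (hwi 2))).add ((hui 3).mul (hwi 3))
  exact h.congr_deriv (by unfold mdot; ring)

/-- Along any affinely parametrized geodesic `β` of `S³₁`, `⟨β(0), β(t)⟩ ≥ -1`;
in particular, points `p, q ∈ S³₁` with `⟨p,q⟩ < -1` cannot be joined by a geodesic. -/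
theorem no_geodesic_joining
    (β : ℝ → Fin 4 → ℝ) (hβsm : ContDiff ℝ (⊤ : ℕ∞) β)
    (hβ1 : ∀ t, mdot (β t) (β t) = 1)
    (hgeo : ∀ t, deriv (deriv β) t = -(mdot (deriv β t) (deriv β t)) • β t) :
    (∀ t, -1 ≤ mdot (β 0) (β t)) ∧
    (∀ p q : Fin 4 → ℝ, mdot p p = 1 → mdot q q = 1 → mdot p q < -1 →
      ¬ ∃ t₀ t₁ : ℝ, β t₀ = p ∧ β t₁ = q) := by
  set v := deriv β with hv
  have hβd : Differentiable ℝ β := hβsm.differentiable (by simp)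
  have hvsm : ContDiff ℝ (⊤ : ℕ∞) v := (contDiff_infty_iff_deriv.mp hβsm).2
  have hvd : Differentiable ℝ v := hvsm.differentiable (by simp)
  have hβv : ∀ t, HasDerivAt β (v t) t := fun t => (hβd t).hasDerivAt
  have hva : ∀ t, HasDerivAt v (deriv v t) t := fun t => (hvd t).hasDerivAt
  set c := fun t => mdot (v t) (v t) with hc
  have hvaeq : ∀ t, deriv v t = -(c t) • β t := hgeo
  -- orthogonality of β and β'
  have horth : ∀ t, mdot (β t) (v t) = 0 := by
    intro t
    have h1 : HasDerivAt (fun t => mdot (β t) (β t)) (mdot (v t) (β t) + mdot (β t) (v t)) t :=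
      mdot_hasDerivAt (hβv t) (hβv t)
    have heq : (fun t => mdot (β t) (β t)) = fun _ => (1 : ℝ) := funext hβ1
    have h2 : HasDerivAt (fun t => mdot (β t) (β t)) 0 t := by
      rw [heq]; exact hasDerivAt_const t 1
    have h3 := h1.unique h2
    rw [mdot_symm (v t)] at h3
    linarith
  -- c is constant
  have hcd : ∀ t, HasDerivAt c 0 t := by
    intro t
    have h1 := mdot_hasDerivAt (hva t) (hva t)
    rw [hvaeq t] at h1
    convert h1 using 1
    rw [mdot_symm (-c t • β t) (v t), mdot_smul, mdot_symm (v t) (β t), horth t]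
    ring
  have hcconst : ∀ t, c t = c 0 :=
    fun t => is_const_of_deriv_eq_zero (fun x => (hcd x).differentiableAt)
      (fun x => (hcd x).deriv) t 0
  set C := c 0 with hC
  -- key estimate
  have key : ∀ s t, -1 ≤ mdot (β s) (β t) := by
    intro s t
    set f := fun t => mdot (β s) (β t) with hf
    set f1 := fun t => mdot (β s) (v t) with hf1
    show -1 ≤ f t
    have hfd : ∀ u, HasDerivAt f (f1 u) u := by
      intro u
      have h := mdot_hasDerivAt (hasDerivAt_const u (β s)) (hβv u)
      have : mdot (0 : Fin 4 → ℝ) (β u) = 0 := by simp [mdot]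
      simpa [this] using h
    have hf1d : ∀ u, HasDerivAt f1 (-C * f u) u := by
      intro u
      have h := mdot_hasDerivAt (hasDerivAt_const u (β s)) (hva u)
      rw [hvaeq u] at h
      have hz : mdot (0 : Fin 4 → ℝ) (v u) = 0 := by simp [mdot]
      have := hcconst u
      convert h using 1
      rw [hz, mdot_smul]
      simp only [hf]
      rw [← this]
      ring
    have hfs : f s = 1 := hβ1 s
    have hf1s : f1 s = 0 := horth s
    set E := fun u => C * (f u) ^ 2 + (f1 u) ^ 2 with hE
    have hEd : ∀ u, HasDerivAt E 0 u := by
      intro u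
      have h := (((hfd u).pow 2).const_mul C).add ((hf1d u).pow 2)
      exact h.congr_deriv (by norm_num; ring)
    have hEconst : ∀ u, E u = C := by
      intro u
      have := is_const_of_deriv_eq_zero (fun x => (hEd x).differentiableAt)
        (fun x => (hEd x).deriv) u s
      rw [this]
      simp [hE, hfs, hf1s]
    have hEt : C * (f t) ^ 2 + (f1 t) ^ 2 = C := by
      have h := hEconst t; simp only [hE] at h; exact h
    have hfcont : Continuous f :=
      (Differentiable.continuous (fun u => (hfd u).differentiableAt))
    rcases lt_trichotomy C 0 with h0 | h0 | h0
    · -- timelike: f² ≥ 1 everywhere, use IVT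
      have hfsq : ∀ u, 1 ≤ (f u) ^ 2 := by
        intro u
        have h := hEconst u
        simp only [hE] at h
        nlinarith [sq_nonneg (f1 u)]
      by_contra hcon
      push_neg at hcon
      have hmem : (0 : ℝ) ∈ Set.uIcc (f s) (f t) := by
        rw [Set.mem_uIcc, hfs]
        right; constructor <;> linarith
      obtain ⟨u, _, hu0⟩ := intermediate_value_uIcc hfcont.continuousOn hmem
      have := hfsq u
      rw [hu0] at this
      norm_num at this
    · -- null: f1 ≡ 0, f constant = 1
      have hf10 : ∀ u, f1 u = 0 := by
        intro u
        have h := hEconst u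
        simp only [hE] at h
        rw [h0] at h
        have h2 : (f1 u) ^ 2 = 0 := by linarith
        exact pow_eq_zero_iff (by norm_num) |>.mp h2
      have hfconst : f t = f s := by
        refine is_const_of_deriv_eq_zero (fun x => (hfd x).differentiableAt) ?_ t s
        intro x
        rw [(hfd x).deriv, hf10 x]
      rw [hfconst, hfs]; norm_num
    · -- spacelike: f² ≤ 1
      have h1 : (f t) ^ 2 ≤ 1 := by nlinarith [sq_nonneg (f1 t)]
      nlinarith
  refine ⟨fun t => key 0 t, ?_⟩
  rintro p q hp hq hpq ⟨t₀, t₁, h0, h1⟩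
  have := key t₀ t₁
  rw [h0, h1] at this
  linarith
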